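/- arXiv:1711.08395 — 3 statements merged into one kernel-verified Lean document; each statement's English description precedes it below -/
import Mathlib

section
/- Let e and q be coprime integers with 1 < e < q, and let w_1 < w_2 < ... < w_g be the gaps of the numerical semigroup generated by e and q, where g = (e-1)(q-1)/2. Then the sum w_1 + ... + w_g equals e*q*(e-1)*(q-1)/4 - (e^2-1)*(q^2-1)/12. -/
private lemma sum_id_Ico' (m : ℕ) : ∑ k ∈ Finset.Ico 1 (m+1), (k:ℚ) = m*(m+1)/2 := by
  induction m with
  | zero => simp
  | succ n ih =>
    rw [Finset.sum_Ico_succ_top (by omega), ih]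
    push_cast; ring

private lemma sum_sq_Ico' (m : ℕ) : ∑ k ∈ Finset.Ico 1 (m+1), (k:ℚ)^2 = m*(m+1)*(2*m+1)/6 := by
  induction m with
  | zero => simp
  | succ n ih =>
    rw [Finset.sum_Ico_succ_top (by omega), ih]
    push_cast; ring

theorem stmt_2 (e q : ℕ) (he : 2 ≤ e) (heq : e < q) (hcop : Nat.Coprime e q)
    (hfin : {n : ℕ | ¬ ∃ a b : ℕ, n = a * e + b * q}.Finite) :
    ∑ w ∈ hfin.toFinset, (w : ℚ) =
      (e : ℚ) * q * (e - 1) * (q - 1) / 4 - ((e : ℚ) ^ 2 - 1) * ((q : ℚ) ^ 2 - 1) / 12 := by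
  classical
  have he0 : 0 < e := by omega
  have heQ : (e:ℚ) ≠ 0 := by positivity
  obtain ⟨p, -, hp⟩ := Nat.exists_mul_mod_eq_one_of_coprime hcop.symm (by omega)
  have hp' : q * p ≡ 1 [MOD e] := by
    show q * p % e = 1 % e
    rw [hp, Nat.mod_eq_of_lt (by omega)]
  set B : ℕ → ℕ := fun n => n * p % e with hB
  have hBlt : ∀ n, B n < e := fun n => Nat.mod_lt _ he0
  have hBmod : ∀ n, B n * q ≡ n [MOD e] := by
    intro n
    calc B n * q ≡ (n * p) * q [MOD e] := Nat.ModEq.mul_right q (Nat.mod_modEq _ _)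
      _ = n * (q * p) := by ring
      _ ≡ n * 1 [MOD e] := Nat.ModEq.mul_left n hp'
      _ = n := by ring
  have hBeq : ∀ b n, b < e → b * q ≡ n [MOD e] → B n = b := by
    intro b n hblt hcong
    have h1 : n * p ≡ b [MOD e] := by
      calc n * p ≡ (b * q) * p [MOD e] := Nat.ModEq.mul_right p hcong.symm
        _ = b * (q * p) := by ring
        _ ≡ b * 1 [MOD e] := Nat.ModEq.mul_left b hp'
        _ = b := by ring
    have h2 : n * p % e = b % e := h1
    rw [hB]
    simp only []
    rw [h2, Nat.mod_eq_of_lt hblt]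
  have rep_iff : ∀ n : ℕ, (∃ a b : ℕ, n = a * e + b * q) ↔ B n * q ≤ n := by
    intro n
    constructor
    · rintro ⟨a, c, rfl⟩
      have h1 : c * q ≡ a * e + c * q [MOD e] := by
        have h0 : (0:ℕ) ≡ a * e [MOD e] :=
          (Nat.modEq_iff_dvd' (Nat.zero_le _)).mpr ⟨a, by rw [Nat.sub_zero, mul_comm]⟩
        simpa using Nat.ModEq.add_right (c*q) h0
      have hBle : B (a*e + c*q) ≤ c := by
        by_cases hc : c < e
        · rw [hBeq c _ hc h1]
        · have := hBlt (a*e + c*q); omega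
      calc B (a*e+c*q) * q ≤ c * q := Nat.mul_le_mul_right q hBle
        _ ≤ a*e + c*q := by omega
    · intro h
      obtain ⟨a, ha⟩ := (Nat.modEq_iff_dvd' h).mp (hBmod n)
      have hc : e * a = a * e := mul_comm e a
      exact ⟨a, B n, by omega⟩
  have hmem_prop : ∀ b k, 1 ≤ b → b < e → 1 ≤ k → k ≤ b*q/e → B (b*q - k*e) = b := by
    intro b k hb1 hb2 hk1 hk2
    have hke : k * e ≤ b * q := (Nat.le_div_iff_mul_le he0).mp hk2
    apply hBeq b _ hb2
    have hd4 : e ∣ b*q - (b*q - k*e) := by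
      have h3 : b*q - (b*q - k*e) = k*e := by omega
      rw [h3]; exact dvd_mul_left e k
    exact ((Nat.modEq_iff_dvd' (by omega)).mpr hd4).symm
  set G : Finset ℕ := (Finset.Ico 1 e).biUnion
      (fun b => (Finset.Ico 1 (b*q/e + 1)).image (fun k => b*q - k*e)) with hG
  have memG : ∀ n, n ∈ G ↔
      ∃ b, (1 ≤ b ∧ b < e) ∧ ∃ k, (1 ≤ k ∧ k ≤ b*q/e) ∧ b*q - k*e = n := by
    intro n
    simp only [hG, Finset.mem_biUnion, Finset.mem_image, Finset.mem_Ico]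
    constructor
    · rintro ⟨b, hb, k, hk, hkn⟩
      exact ⟨b, ⟨hb.1, hb.2⟩, k, ⟨hk.1, by omega⟩, hkn⟩
    · rintro ⟨b, hb, k, hk, hkn⟩
      exact ⟨b, ⟨hb.1, hb.2⟩, k, ⟨hk.1, by omega⟩, hkn⟩
  have hset : hfin.toFinset = G := by
    ext n
    rw [Set.Finite.mem_toFinset]
    simp only [Set.mem_setOf_eq]
    rw [memG n]
    constructor
    · intro hn
      have h : n < B n * q := by
        rcases Nat.lt_or_ge n (B n * q) with h | h
        · exact h
        · exact absurd ((rep_iff n).mpr h) hn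
      have hb1 : 1 ≤ B n := by
        rcases Nat.eq_zero_or_pos (B n) with h0 | h0
        · rw [h0] at h; omega
        · exact h0
      obtain ⟨k, hk⟩ := (Nat.modEq_iff_dvd' h.le).mp (hBmod n).symm
      have hcm : e * k = k * e := mul_comm e k
      have hk1 : 1 ≤ k := by
        rcases Nat.eq_zero_or_pos k with h0 | h0
        · rw [h0, mul_zero] at hk; omega
        · exact h0
      have hk2 : k ≤ B n * q / e := (Nat.le_div_iff_mul_le he0).mpr (by omega)
      exact ⟨B n, ⟨hb1, hBlt n⟩, k, ⟨hk1, hk2⟩, by omega⟩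
    · rintro ⟨b, ⟨hb1, hb2⟩, k, ⟨hk1, hk2⟩, hn⟩
      intro hrep
      have hke : k * e ≤ b * q := (Nat.le_div_iff_mul_le he0).mp hk2
      have hBn : B n = b := by rw [← hn]; exact hmem_prop b k hb1 hb2 hk1 hk2
      have hle := (rep_iff n).mp hrep
      rw [hBn] at hle
      have h1e : 1 * e ≤ k * e := Nat.mul_le_mul_right e hk1
      omega
  have hdisj : (↑(Finset.Ico 1 e) : Set ℕ).PairwiseDisjoint
      (fun b => (Finset.Ico 1 (b*q/e + 1)).image (fun k => b*q - k*e)) := by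
    intro b hb b' hb' hne
    simp only [Finset.coe_Ico, Set.mem_Ico] at hb hb'
    refine Finset.disjoint_left.mpr ?_
    intro n hn hn'
    simp only [Finset.mem_image, Finset.mem_Ico] at hn hn'
    obtain ⟨k, ⟨hk1, hk2⟩, hkn⟩ := hn
    obtain ⟨k', ⟨hk1', hk2'⟩, hkn'⟩ := hn'
    have e1 : B n = b := hkn ▸ hmem_prop b k hb.1 hb.2 hk1 (by omega)
    have e2 : B n = b' := hkn' ▸ hmem_prop b' k' hb'.1 hb'.2 hk1' (by omega)
    exact hne (e1 ▸ e2 ▸ rfl)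
  calc ∑ w ∈ hfin.toFinset, (w:ℚ)
      = ∑ b ∈ Finset.Ico 1 e, ∑ k ∈ Finset.Ico 1 (b*q/e+1), ((b*q - k*e : ℕ):ℚ) := by
        rw [hset, hG, Finset.sum_biUnion hdisj]
        refine Finset.sum_congr rfl (fun b hb => ?_)
        simp only [Finset.mem_Ico] at hb
        refine Finset.sum_image (fun k hk k' hk' hEq => ?_)
        simp only [Finset.mem_coe, Finset.mem_Ico] at hk hk'
        have h1 : k * e ≤ b*q := (Nat.le_div_iff_mul_le he0).mp (by omega)
        have h2 : k' * e ≤ b*q := (Nat.le_div_iff_mul_le he0).mp (by omega)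
        have hEq' : b*q - k*e = b*q - k'*e := hEq
        have : k * e = k' * e := by omega
        exact Nat.eq_of_mul_eq_mul_right he0 this
    _ = ∑ b ∈ Finset.Ico 1 e,
        (((q:ℚ)^2*b^2 - e*q*b)/(2*e)
          + ((e:ℚ)*((b*q % e : ℕ):ℚ) - ((b*q % e : ℕ):ℚ)^2)/(2*e)) := by
      refine Finset.sum_congr rfl (fun b hb => ?_)
      simp only [Finset.mem_Ico] at hb
      have hdecomp : e * (b*q/e) + b*q % e = b * q := Nat.div_add_mod _ _
      have hdQ : (e:ℚ) * (b*q/e : ℕ) + ((b*q % e : ℕ):ℚ) = (b:ℚ) * q := by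
        exact_mod_cast hdecomp
      have hmQ : ((b*q/e : ℕ):ℚ) = ((b:ℚ)*q - ((b*q % e : ℕ):ℚ))/e := by
        field_simp
        linarith [hdQ]
      have step1 : ∀ k ∈ Finset.Ico 1 (b*q/e+1), ((b*q - k*e : ℕ):ℚ) = (b:ℚ)*q - k*e := by
        intro k hk
        simp only [Finset.mem_Ico] at hk
        have hke : k * e ≤ b*q := (Nat.le_div_iff_mul_le he0).mp (by omega)
        rw [Nat.cast_sub hke]
        push_cast; ring
      have hcast : ∑ k ∈ Finset.Ico 1 (b*q/e+1), ((k:ℚ)*e)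
          = ((b*q/e : ℕ):ℚ) * (((b*q/e : ℕ):ℚ)+1)/2 * e := by
        rw [← Finset.sum_mul, sum_id_Ico' (b*q/e)]
      rw [Finset.sum_congr rfl step1, Finset.sum_sub_distrib, Finset.sum_const,
        Nat.card_Ico, hcast]
      simp only [Nat.add_sub_cancel, nsmul_eq_mul]
      rw [hmQ]
      field_simp
      ring
    _ = (∑ b ∈ Finset.Ico 1 e, ((q:ℚ)^2*b^2 - e*q*b)/(2*e))
        + ∑ b ∈ Finset.Ico 1 e, ((e:ℚ)*((b*q % e : ℕ):ℚ) - ((b*q % e : ℕ):ℚ)^2)/(2*e) :=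
      Finset.sum_add_distrib
    _ = (∑ b ∈ Finset.Ico 1 e, ((q:ℚ)^2*b^2 - e*q*b)/(2*e))
        + ∑ b ∈ Finset.Ico 1 e, ((e:ℚ)*(b:ℚ) - (b:ℚ)^2)/(2*e) := by
      congr 1
      refine Finset.sum_nbij' (i := fun b => b*q % e) (j := fun c => c*p % e)
        ?_ ?_ ?_ ?_ ?_
      · intro b hb
        simp only [Finset.mem_Ico] at hb ⊢
        refine ⟨?_, Nat.mod_lt _ he0⟩
        rcases Nat.eq_zero_or_pos (b*q % e) with h0 | h0
        · exfalso
          have := hcop.dvd_of_dvd_mul_right (Nat.dvd_of_mod_eq_zero h0)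
          have := Nat.le_of_dvd (by omega) this
          omega
        · exact h0
      · intro c hc
        simp only [Finset.mem_Ico] at hc ⊢
        refine ⟨?_, Nat.mod_lt _ he0⟩
        rcases Nat.eq_zero_or_pos (c*p % e) with h0 | h0
        · exfalso
          have hd1 : e ∣ c * p := Nat.dvd_of_mod_eq_zero h0
          have hd2 : e ∣ c * (q * p) := by
            obtain ⟨t, ht⟩ := hd1
            exact ⟨t * q, by rw [mul_comm q p, ← mul_assoc, ht]; ring⟩
          have h1 : c * (q * p) ≡ c [MOD e] := by
            calc c * (q*p) ≡ c * 1 [MOD e] := Nat.ModEq.mul_left c hp'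
              _ = c := by ring
          have h2 : c * (q*p) % e = c % e := h1
          have h3 : c % e = 0 := by
            rw [← h2]; exact Nat.mod_eq_zero_of_dvd hd2
          have h4 : c % e = c := Nat.mod_eq_of_lt hc.2
          omega
        · exact h0
      · intro b hb
        simp only [Finset.mem_Ico] at hb
        have h1 : (b*q % e)*p ≡ b [MOD e] := by
          calc (b*q % e)*p ≡ (b*q)*p [MOD e] := Nat.ModEq.mul_right p (Nat.mod_modEq _ _)
            _ = b * (q*p) := by ring
            _ ≡ b * 1 [MOD e] := Nat.ModEq.mul_left b hp'
            _ = b := by ring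
        have h2 : (b*q % e)*p % e = b % e := h1
        show (b*q % e)*p % e = b
        rw [h2, Nat.mod_eq_of_lt hb.2]
      · intro c hc
        simp only [Finset.mem_Ico] at hc
        have h1 : (c*p % e)*q ≡ c [MOD e] := by
          calc (c*p % e)*q ≡ (c*p)*q [MOD e] := Nat.ModEq.mul_right q (Nat.mod_modEq _ _)
            _ = c * (q*p) := by ring
            _ ≡ c * 1 [MOD e] := Nat.ModEq.mul_left c hp'
            _ = c := by ring
        have h2 : (c*p % e)*q % e = c % e := h1
        show (c*p % e)*q % e = c
        rw [h2, Nat.mod_eq_of_lt hc.2]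
      · intro b hb
        rfl
    _ = (e : ℚ) * q * (e - 1) * (q - 1) / 4 - ((e : ℚ) ^ 2 - 1) * ((q : ℚ) ^ 2 - 1) / 12 := by
      obtain ⟨E, rfl⟩ : ∃ E, e = E + 1 := ⟨e - 1, by omega⟩
      have hEne : ((E:ℚ)+1) ≠ 0 := by positivity
      have hS1 : ∑ b ∈ Finset.Ico 1 (E+1), (b:ℚ) = E*(E+1)/2 := sum_id_Ico' E
      have hS2 : ∑ b ∈ Finset.Ico 1 (E+1), (b:ℚ)^2 = E*(E+1)*(2*E+1)/6 := sum_sq_Ico' E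
      calc (∑ b ∈ Finset.Ico 1 (E+1), ((q:ℚ)^2*b^2 - (E+1:ℕ)*q*b)/(2*(E+1:ℕ)))
            + ∑ b ∈ Finset.Ico 1 (E+1), (((E+1:ℕ):ℚ)*(b:ℚ) - (b:ℚ)^2)/(2*(E+1:ℕ))
          = ∑ b ∈ Finset.Ico 1 (E+1),
              (((q:ℚ)^2-1)/(2*((E:ℚ)+1)) * (b:ℚ)^2
                + ((((E:ℚ)+1) - ((E:ℚ)+1)*q)/(2*((E:ℚ)+1))) * (b:ℚ)) := by
            rw [← Finset.sum_add_distrib]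
            refine Finset.sum_congr rfl fun b _ => ?_
            push_cast
            field_simp
            ring
        _ = ((q:ℚ)^2-1)/(2*((E:ℚ)+1)) * ((E:ℚ)*(E+1)*(2*E+1)/6)
              + ((((E:ℚ)+1) - ((E:ℚ)+1)*q)/(2*((E:ℚ)+1))) * ((E:ℚ)*(E+1)/2) := by
            rw [Finset.sum_add_distrib, ← Finset.mul_sum, ← Finset.mul_sum, hS1, hS2]
        _ = ((E+1:ℕ) : ℚ) * q * ((E+1:ℕ) - 1) * (q - 1) / 4
              - (((E+1:ℕ) : ℚ) ^ 2 - 1) * ((q : ℚ) ^ 2 - 1) / 12 := by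
            push_cast
            field_simp
            ring
end

section
/- Let e and q be coprime integers with 2 ≤ e < q. The quantity (e-3)*(q-3)/2 + floor(q/e) - 1 equals zero if and only if (e,q) is one of (2, 2g+1) for some g ≥ 1 (i.e., e = 2 and q odd ≥ 3), or (e,q) = (3,4), or (e,q) = (3,5). -/
theorem stmt_4 (e q : ℕ) (he : 2 ≤ e) (heq : e < q) (hcop : Nat.Coprime e q) :
    ((e : ℚ) - 3) * ((q : ℚ) - 3) / 2 + (q / e : ℕ) - 1 = 0 ↔
      (e = 2 ∧ Odd q) ∨ (e = 3 ∧ q = 4) ∨ (e = 3 ∧ q = 5) := by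
  rcases eq_or_lt_of_le he with h2 | h2
  · -- e = 2
    subst h2
    have hq : Odd q := by
      rcases Nat.even_or_odd q with hev | hod
      · exfalso
        obtain ⟨k, hk⟩ := hev
        have : (2 : ℕ) ∣ q := ⟨k, by omega⟩
        have h2d : ¬ Nat.Coprime 2 q := by
          intro hc
          have := Nat.Coprime.eq_one_of_dvd hc ‹(2:ℕ) ∣ q›
          omega
        exact h2d hcop
      · exact hod
    constructor
    · intro _; exact Or.inl ⟨rfl, hq⟩
    · intro _
      obtain ⟨k, hk⟩ := hq
      have hdiv : q / 2 = k := by omega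
      rw [hdiv, hk]
      push_cast
      ring
  · rcases eq_or_lt_of_le (show 3 ≤ e from h2) with h3 | h3
    · -- e = 3
      have he3 : e = 3 := h3.symm
      subst he3
      have key : (((3:ℕ) : ℚ) - 3) = 0 := by norm_num
      rw [key, zero_mul, zero_div, zero_add]
      constructor
      · intro hz
        have : ((q / 3 : ℕ) : ℚ) = 1 := by linarith
        have hq3 : q / 3 = 1 := by exact_mod_cast this
        have : q = 4 ∨ q = 5 := by omega
        rcases this with h | h
        · exact Or.inr (Or.inl ⟨rfl, h⟩)
        · exact Or.inr (Or.inr ⟨rfl, h⟩)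
      · rintro (⟨h, _⟩ | ⟨_, hq⟩ | ⟨_, hq⟩) <;> first | omega | (subst hq; norm_num)
    · -- e ≥ 4
      have he4 : 4 ≤ e := h3
      constructor
      · intro hz
        exfalso
        have h1 : (1 : ℚ) ≤ (e : ℚ) - 3 := by
          have : (4 : ℚ) ≤ (e : ℚ) := by exact_mod_cast he4
          linarith
        have h2' : (2 : ℚ) ≤ (q : ℚ) - 3 := by
          have : (5 : ℚ) ≤ (q : ℚ) := by exact_mod_cast (by omega : 5 ≤ q)
          linarith
        have hfl : 1 ≤ q / e := Nat.one_le_div_iff (by omega) |>.mpr (le_of_lt heq)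
        have hflq : (1 : ℚ) ≤ ((q / e : ℕ) : ℚ) := by exact_mod_cast hfl
        nlinarith
      · rintro (⟨h, _⟩ | ⟨h, _⟩ | ⟨h, _⟩) <;> omega
end

section
/- Let R be a commutative ring and f₁, f₂ ∈ R[x, y]. Then the polynomial (f₁(x,y)f₂(z,y) - f₁(z,y)f₂(x,y)) - (f₁(x,y)f₂(x,w) - f₁(z,y)f₂(z,w)) - (f₁(z,w)f₂(z,y) - f₁(x,w)f₂(x,y)) + (f₁(z,w)f₂(x,w) - f₁(x,w)f₂(z,w)), viewed in R[x,y,z,w], is divisible by (z - x)·(w - y). -/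
open MvPolynomial

lemma aeval_sub_dvd_aux {R S : Type*} [CommRing R] [CommRing S] [Algebra R S] {n : ℕ}
    (f : MvPolynomial (Fin n) R) (s t : Fin n → S) (d : S)
    (h : ∀ i, d ∣ s i - t i) : d ∣ aeval s f - aeval t f := by
  induction f using MvPolynomial.induction_on with
  | C a => simp
  | add p q hp hq =>
      have : aeval s (p + q) - aeval t (p + q)
          = (aeval s p - aeval t p) + (aeval s q - aeval t q) := by
        simp only [map_add]; ring
      rw [this]; exact dvd_add hp hq
  | mul_X p i hp =>
      have : aeval s (p * X i) - aeval t (p * X i)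
          = aeval s p * (s i - t i) + (aeval s p - aeval t p) * t i := by
        simp only [map_mul, aeval_X]; ring
      rw [this]; exact dvd_add ((h i).mul_left _) (hp.mul_right _)

lemma double_diff_dvd {R : Type*} [CommRing R] (f : MvPolynomial (Fin 2) R) :
    ((X 2 : MvPolynomial (Fin 4) R) - X 0) * (X 3 - X 1) ∣
      aeval ![X 0, X 1] f - aeval ![X 2, X 1] f
        - aeval ![X 0, X 3] f + aeval ![X 2, X 3] f := by
  induction f using MvPolynomial.induction_on with
  | C a => simp
  | add p q hp hq =>
      have : aeval ![(X 0 : MvPolynomial (Fin 4) R), X 1] (p + q)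
            - aeval ![X 2, X 1] (p + q) - aeval ![X 0, X 3] (p + q)
            + aeval ![X 2, X 3] (p + q)
          = (aeval ![X 0, X 1] p - aeval ![X 2, X 1] p - aeval ![X 0, X 3] p
              + aeval ![X 2, X 3] p)
            + (aeval ![X 0, X 1] q - aeval ![X 2, X 1] q - aeval ![X 0, X 3] q
              + aeval ![X 2, X 3] q) := by
        simp only [map_add]; ring
      rw [this]; exact dvd_add hp hq
  | mul_X p i hp =>
      have h1 : ((X 2 : MvPolynomial (Fin 4) R) - X 0)
          ∣ aeval ![X 0, X 1] p - aeval ![X 2, X 1] p := by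
        apply aeval_sub_dvd_aux
        intro i
        fin_cases i
        · show (X 2 : MvPolynomial (Fin 4) R) - X 0 ∣ X 0 - X 2
          exact ⟨-1, by ring⟩
        · show (X 2 : MvPolynomial (Fin 4) R) - X 0 ∣ X 1 - X 1
          exact ⟨0, by ring⟩
      have h2 : ((X 3 : MvPolynomial (Fin 4) R) - X 1)
          ∣ aeval ![X 0, X 1] p - aeval ![X 0, X 3] p := by
        apply aeval_sub_dvd_aux
        intro i
        fin_cases i
        · show (X 3 : MvPolynomial (Fin 4) R) - X 1 ∣ X 0 - X 0
          exact ⟨0, by ring⟩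
        · show (X 3 : MvPolynomial (Fin 4) R) - X 1 ∣ X 1 - X 3
          exact ⟨-1, by ring⟩
      fin_cases i
      · show ((X 2 : MvPolynomial (Fin 4) R) - X 0) * (X 3 - X 1) ∣
            aeval ![X 0, X 1] (p * X 0) - aeval ![X 2, X 1] (p * X 0)
              - aeval ![X 0, X 3] (p * X 0) + aeval ![X 2, X 3] (p * X 0)
        have key : aeval ![(X 0 : MvPolynomial (Fin 4) R), X 1] (p * X 0)
            - aeval ![X 2, X 1] (p * X 0) - aeval ![X 0, X 3] (p * X 0)
            + aeval ![X 2, X 3] (p * X 0)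
            = -((X 2 - X 0) * (aeval ![X 0, X 1] p - aeval ![X 0, X 3] p))
              + X 2 * (aeval ![X 0, X 1] p - aeval ![X 2, X 1] p
                - aeval ![X 0, X 3] p + aeval ![X 2, X 3] p) := by
          simp only [map_mul, aeval_X]
          simp [Matrix.cons_val_zero, Matrix.cons_val_one]
          ring
        rw [key]
        exact dvd_add (dvd_neg.mpr (mul_dvd_mul_left _ h2)) (hp.mul_left _)
      · show ((X 2 : MvPolynomial (Fin 4) R) - X 0) * (X 3 - X 1) ∣
            aeval ![X 0, X 1] (p * X 1) - aeval ![X 2, X 1] (p * X 1)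
              - aeval ![X 0, X 3] (p * X 1) + aeval ![X 2, X 3] (p * X 1)
        have key : aeval ![(X 0 : MvPolynomial (Fin 4) R), X 1] (p * X 1)
            - aeval ![X 2, X 1] (p * X 1) - aeval ![X 0, X 3] (p * X 1)
            + aeval ![X 2, X 3] (p * X 1)
            = -((aeval ![X 0, X 1] p - aeval ![X 2, X 1] p) * (X 3 - X 1))
              + X 3 * (aeval ![X 0, X 1] p - aeval ![X 2, X 1] p
                - aeval ![X 0, X 3] p + aeval ![X 2, X 3] p) := by
          simp only [map_mul, aeval_X]
          simp [Matrix.cons_val_zero, Matrix.cons_val_one]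
          ring
        rw [key]
        exact dvd_add (dvd_neg.mpr (mul_dvd_mul_right h1 _)) (hp.mul_left _)

theorem stmt_17 (R : Type*) [CommRing R] (f₁ f₂ : MvPolynomial (Fin 2) R) :
    -- variables: x = X 0, y = X 1, z = X 2, w = X 3
    (fun (A : MvPolynomial (Fin 2) R → Fin 4 → Fin 4 → MvPolynomial (Fin 4) R) =>
      (X 2 - X 0) * (X 3 - X 1) ∣
        ((A f₁ 0 1 * A f₂ 2 1 - A f₁ 2 1 * A f₂ 0 1)
          - (A f₁ 0 1 * A f₂ 0 3 - A f₁ 2 1 * A f₂ 2 3)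
          - (A f₁ 2 3 * A f₂ 2 1 - A f₁ 0 3 * A f₂ 0 1)
          + (A f₁ 2 3 * A f₂ 0 3 - A f₁ 0 3 * A f₂ 2 3)))
      (fun f i j => MvPolynomial.aeval ![X i, X j] f) := by
  simp only
  set a := aeval ![(X 0 : MvPolynomial (Fin 4) R), X 1] f₁ with ha
  set b := aeval ![(X 2 : MvPolynomial (Fin 4) R), X 1] f₁ with hb
  set c := aeval ![(X 0 : MvPolynomial (Fin 4) R), X 3] f₁ with hc
  set d := aeval ![(X 2 : MvPolynomial (Fin 4) R), X 3] f₁ with hd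
  set A := aeval ![(X 0 : MvPolynomial (Fin 4) R), X 1] f₂ with hA
  set B := aeval ![(X 2 : MvPolynomial (Fin 4) R), X 1] f₂ with hB
  set C := aeval ![(X 0 : MvPolynomial (Fin 4) R), X 3] f₂ with hC
  set D := aeval ![(X 2 : MvPolynomial (Fin 4) R), X 3] f₂ with hD
  have hzx : ∀ i, ((X 2 : MvPolynomial (Fin 4) R) - X 0)
      ∣ (![(X 0 : MvPolynomial (Fin 4) R), X 1] i) - (![X 2, X 1] i) := by
    intro i; fin_cases i
    · show (X 2 : MvPolynomial (Fin 4) R) - X 0 ∣ X 0 - X 2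
      exact ⟨-1, by ring⟩
    · show (X 2 : MvPolynomial (Fin 4) R) - X 0 ∣ X 1 - X 1
      exact ⟨0, by ring⟩
  have hwy : ∀ i, ((X 3 : MvPolynomial (Fin 4) R) - X 1)
      ∣ (![(X 0 : MvPolynomial (Fin 4) R), X 1] i) - (![X 0, X 3] i) := by
    intro i; fin_cases i
    · show (X 3 : MvPolynomial (Fin 4) R) - X 1 ∣ X 0 - X 0
      exact ⟨0, by ring⟩
    · show (X 3 : MvPolynomial (Fin 4) R) - X 1 ∣ X 1 - X 3
      exact ⟨-1, by ring⟩
  have hu : ((X 2 : MvPolynomial (Fin 4) R) - X 0) ∣ a - b :=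
    aeval_sub_dvd_aux f₁ _ _ _ hzx
  have hv : ((X 3 : MvPolynomial (Fin 4) R) - X 1) ∣ a - c :=
    aeval_sub_dvd_aux f₁ _ _ _ hwy
  have hU : ((X 2 : MvPolynomial (Fin 4) R) - X 0) ∣ A - B :=
    aeval_sub_dvd_aux f₂ _ _ _ hzx
  have hV : ((X 3 : MvPolynomial (Fin 4) R) - X 1) ∣ A - C :=
    aeval_sub_dvd_aux f₂ _ _ _ hwy
  have hP : ((X 2 : MvPolynomial (Fin 4) R) - X 0) * (X 3 - X 1) ∣ a - b - c + d :=
    double_diff_dvd f₁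
  have hP' : ((X 2 : MvPolynomial (Fin 4) R) - X 0) * (X 3 - X 1) ∣ A - B - C + D :=
    double_diff_dvd f₂
  have key : (a * B - b * A) - (a * C - b * D) - (d * B - c * A) + (d * C - c * D)
      = 2 * ((a - b) * (A - C)) - 2 * ((a - c) * (A - B))
        + (a - b - c + d) * ((A - B) - (A - C))
        + (A - B - C + D) * ((a - c) - (a - b)) := by ring
  rw [key]
  refine dvd_add (dvd_add (dvd_sub ?_ ?_) (hP.mul_right _)) (hP'.mul_right _)
  · exact (mul_dvd_mul hu hV).mul_left 2
  · have := mul_dvd_mul hv hU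
    rw [mul_comm ((X 3 : MvPolynomial (Fin 4) R) - X 1) (X 2 - X 0)] at this
    exact this.mul_left 2
end
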